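/- Let d, m ≥ 1, let Π : Fin m → (d×d complex matrices) be Hermitian positive semidefinite with ∑_ξ Π_ξ = I, let ρ be Hermitian positive definite with tr ρ = 1, set p_ξ := tr(Π_ξ ρ) > 0, let F(X) = ∑_ξ p_ξ⁻¹ tr(Π_ξ X) Π_ξ on Hermitian matrices, and assume F is bijective. Define Π̄_ξ := Π_ξ − (tr Π_ξ / d)·I and F̄(X) := ∑_ξ p_ξ⁻¹ tr(Π̄_ξ X) Π̄_ξ. Then for every Hermitian matrix X with tr X = 0 one has F⁻¹(F̄(X)) − tr(ρ · F̄(X)) · ρ = X; that is, the map X ↦ F⁻¹(X) − tr(ρX)ρ is a left inverse of F̄ on the space of traceless Hermitian matrices. -/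

import Mathlib

open Matrix ComplexOrder
open scoped BigOperators

/-- The map `X ↦ F⁻¹(X) - tr(ρX)•ρ` is a left inverse of the traceless frame
superoperator `F̄(X) = ∑ ξ, p ξ⁻¹ tr(P̄ ξ X) • P̄ ξ`, where
`P̄ ξ = P ξ - (tr(P ξ)/d)•1`, on the space of traceless Hermitian matrices:
the paper's identity `F̄(ρ)⁺ = F(ρ)⁻¹ - |ρ⟩⟩⟨⟨ρ|`. -/
theorem stmt_5 (d m : ℕ) (hd : 1 ≤ d) (hm : 1 ≤ m)
    (P : Fin m → Matrix (Fin d) (Fin d) ℂ)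
    (hP : ∀ ξ, (P ξ).PosSemidef) (hPsum : ∑ ξ, P ξ = 1)
    (ρ : Matrix (Fin d) (Fin d) ℂ) (hρ : ρ.PosDef) (hρtr : ρ.trace = 1)
    (p : Fin m → ℝ) (hp : ∀ ξ, (p ξ : ℂ) = (P ξ * ρ).trace) (hppos : ∀ ξ, 0 < p ξ)
    (F G : Matrix (Fin d) (Fin d) ℂ → Matrix (Fin d) (Fin d) ℂ)
    (hF : ∀ X, F X = ∑ ξ, (((p ξ : ℂ))⁻¹ * (P ξ * X).trace) • P ξ)
    (hGF : ∀ X, G (F X) = X) (hFG : ∀ X, F (G X) = X)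
    (Pbar : Fin m → Matrix (Fin d) (Fin d) ℂ)
    (hPbar : ∀ ξ, Pbar ξ = P ξ - ((P ξ).trace / d) • 1)
    (Fbar : Matrix (Fin d) (Fin d) ℂ → Matrix (Fin d) (Fin d) ℂ)
    (hFbar : ∀ X, Fbar X = ∑ ξ, (((p ξ : ℂ))⁻¹ * (Pbar ξ * X).trace) • Pbar ξ) :
    ∀ X : Matrix (Fin d) (Fin d) ℂ, X.IsHermitian → X.trace = 0 →
      G (Fbar X) - ((ρ * Fbar X).trace) • ρ = X := by
  intro X hX hXtr
  have hpne : ∀ ξ, (p ξ : ℂ) ≠ 0 := fun ξ => by exact_mod_cast (hppos ξ).ne'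
  set c : ℂ := ∑ ξ, (p ξ : ℂ)⁻¹ * (P ξ * X).trace * ((P ξ).trace / d) with hc
  have key : ∀ ξ, (Pbar ξ * X).trace = (P ξ * X).trace := by
    intro ξ
    rw [hPbar, Matrix.sub_mul, Matrix.trace_sub, Matrix.smul_mul, Matrix.one_mul,
      Matrix.trace_smul, hXtr, smul_zero, sub_zero]
  have hFbarX : Fbar X = F (X - c • ρ) := by
    rw [hFbar, hF]
    have h1 : ∀ ξ : Fin m, ((p ξ : ℂ)⁻¹ * (Pbar ξ * X).trace) • Pbar ξ
        = ((p ξ : ℂ)⁻¹ * (P ξ * X).trace) • P ξ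
          - ((p ξ : ℂ)⁻¹ * (P ξ * X).trace * ((P ξ).trace / d))
              • (1 : Matrix (Fin d) (Fin d) ℂ) := by
      intro ξ
      rw [key, hPbar, smul_sub, smul_smul]
    have h2 : ∀ ξ : Fin m, ((p ξ : ℂ)⁻¹ * (P ξ * (X - c • ρ)).trace) • P ξ
        = ((p ξ : ℂ)⁻¹ * (P ξ * X).trace) • P ξ - c • P ξ := by
      intro ξ
      have ht : (P ξ * (X - c • ρ)).trace = (P ξ * X).trace - c * (p ξ : ℂ) := by
        rw [Matrix.mul_sub, Matrix.trace_sub, Matrix.mul_smul, Matrix.trace_smul, hp,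
          smul_eq_mul]
      rw [ht, mul_sub, sub_smul]
      congr 2
      rw [mul_comm c, ← mul_assoc, inv_mul_cancel₀ (hpne ξ), one_mul]
    simp only [h1, h2, Finset.sum_sub_distrib]
    congr 1
    rw [← Finset.sum_smul, ← Finset.smul_sum, hPsum, ← hc]
  have hG : G (Fbar X) = X - c • ρ := by rw [hFbarX, hGF]
  have htr : (ρ * Fbar X).trace = -c := by
    rw [hFbar, Matrix.mul_sum, Matrix.trace_sum]
    have hterm : ∀ ξ : Fin m,
        (ρ * (((p ξ : ℂ)⁻¹ * (Pbar ξ * X).trace) • Pbar ξ)).trace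
        = (P ξ * X).trace - (p ξ : ℂ)⁻¹ * (P ξ * X).trace * ((P ξ).trace / d) := by
      intro ξ
      rw [Matrix.mul_smul, Matrix.trace_smul, key, hPbar, Matrix.mul_sub, Matrix.trace_sub,
        Matrix.mul_smul, Matrix.mul_one, Matrix.trace_smul]
      have hρP : (ρ * P ξ).trace = (p ξ : ℂ) := by rw [Matrix.trace_mul_comm, ← hp]
      rw [hρP, hρtr]
      have := hpne ξ
      have hd' : (d : ℂ) ≠ 0 := by exact_mod_cast (show d ≠ 0 by omega)
      field_simp
      linear_combination (-((P ξ).trace * (P ξ * X).trace * ((p ξ : ℂ) * (p ξ : ℂ)⁻¹))) * mul_inv_cancel₀ hd' + ((p ξ : ℂ) * d * (P ξ * X).trace - (P ξ).trace * (P ξ * X).trace) * mul_inv_cancel₀ this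
    simp only [hterm, Finset.sum_sub_distrib, ← hc]
    have hzero : ∑ ξ, (P ξ * X).trace = 0 := by
      rw [← Matrix.trace_sum, ← Finset.sum_mul, hPsum, Matrix.one_mul, hXtr]
    rw [hzero, zero_sub]
  rw [hG, htr, neg_smul, sub_neg_eq_add, sub_add_cancel]
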